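/- Let u be a fixed-point-free involution on {1,...,2n} and t = (a,b) a transposition with u(a) ≠ b. Then there is exactly one transposition t' ≠ t with t'⁻¹ u t' = t⁻¹ u t, namely t' = (u(a), u(b)). -/
import Mathlib


open Equiv

/-- A fixed-point-free involution of `Fin m`. -/
def IsFpfInvolution {m : ℕ} (u : Equiv.Perm (Fin m)) : Prop :=
  u * u = 1 ∧ ∀ i, u i ≠ i

/-- The number of inversions of a permutation (its Coxeter length). -/
def invCount {m : ℕ} (u : Equiv.Perm (Fin m)) : ℕ :=
  (Finset.univ.filter (fun p : Fin m × Fin m => p.1 < p.2 ∧ u p.2 < u p.1)).card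

/-- One step in the Bruhat order: right multiplication by a transposition
which increases the length. -/
def BruhatStep {m : ℕ} (x y : Equiv.Perm (Fin m)) : Prop :=
  (∃ a b : Fin m, a ≠ b ∧ y = x * Equiv.swap a b) ∧ invCount x < invCount y

/-- The Bruhat order on the symmetric group. -/
def BruhatLE {m : ℕ} (x y : Equiv.Perm (Fin m)) : Prop :=
  Relation.ReflTransGen BruhatStep x y

/-- The dual of the Bruhat order (restricted to fixed-point-free involutions,
this is the order `⪯` with minimum element `w₀`). -/
def DualLE {m : ℕ} (x y : Equiv.Perm (Fin m)) : Prop := BruhatLE y x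

/-- Strict version of `DualLE`. -/
def DualLT {m : ℕ} (x y : Equiv.Perm (Fin m)) : Prop := BruhatLE y x ∧ x ≠ y

/-- if `u` is a fixed-point-free involution and `t = (a,b)` with
`u a ≠ b`, then `t' = (u a, u b)` is the unique transposition other than `t`
conjugating `u` to the same element. -/
lemma aux_ne {m : ℕ} (u : Equiv.Perm (Fin m)) (huu : ∀ x, u (u x) = x)
    (hfpf : ∀ i, u i ≠ i) (a b c d : Fin m) (hab : a ≠ b)
    (hne : Equiv.swap c d ≠ Equiv.swap a b)
    (E : Equiv.swap c d (u (Equiv.swap c d a)) = u b) : a ≠ c := by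
  have hinj : Function.Injective u := fun x y hxy => by rw [← huu x, hxy, huu]
  rintro rfl
  rw [Equiv.swap_apply_left] at E
  by_cases hda : u d = a
  · have hd : d = u a := by rw [← huu d, hda]
    rw [hda, Equiv.swap_apply_left] at E
    exact hab (hinj (by rw [← E, ← hd]))
  · rw [Equiv.swap_apply_of_ne_of_ne hda (hfpf d)] at E
    exact hne (by rw [hinj E])

theorem fpf_conj_swap_unique_other {n : ℕ} (u : Equiv.Perm (Fin (2 * n)))
    (hu : IsFpfInvolution u) (a b : Fin (2 * n)) (hab : a ≠ b) (h : u a ≠ b) :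
    Equiv.swap (u a) (u b) ≠ Equiv.swap a b ∧
    (Equiv.swap (u a) (u b))⁻¹ * u * Equiv.swap (u a) (u b) =
      (Equiv.swap a b)⁻¹ * u * Equiv.swap a b ∧
    ∀ t' : Equiv.Perm (Fin (2 * n)), t'.IsSwap → t' ≠ Equiv.swap a b →
      t'⁻¹ * u * t' = (Equiv.swap a b)⁻¹ * u * Equiv.swap a b →
      t' = Equiv.swap (u a) (u b) := by
  obtain ⟨hu2, hfpf⟩ := hu
  have huu : ∀ x, u (u x) = x := fun x => by
    rw [← Equiv.Perm.mul_apply, hu2, Equiv.Perm.one_apply]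
  have ha : u a ≠ a := hfpf a
  have hb : u b ≠ b := hfpf b
  have hba : u b ≠ a := fun hc => h (by rw [← hc, huu])
  have huab : u a ≠ u b := fun hc => hab (by rw [← huu a, hc, huu])
  refine ⟨?_, ?_, ?_⟩
  · intro heq
    have h1 : Equiv.swap (u a) (u b) (u a) = Equiv.swap a b (u a) := by rw [heq]
    rw [Equiv.swap_apply_left, Equiv.swap_apply_of_ne_of_ne ha h] at h1
    exact huab h1.symm
  · have hinj : Function.Injective u := fun x y hxy => by rw [← huu x, hxy, huu]
    refine Equiv.ext fun x => ?_
    simp only [Equiv.swap_inv, Equiv.Perm.mul_apply]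
    by_cases hx1 : x = a
    · subst hx1
      rw [Equiv.swap_apply_of_ne_of_ne (Ne.symm ha) (Ne.symm hba),
        Equiv.swap_apply_left, Equiv.swap_apply_left,
        Equiv.swap_apply_of_ne_of_ne hba hb]
    by_cases hx2 : x = b
    · subst hx2
      rw [Equiv.swap_apply_of_ne_of_ne (Ne.symm h) (Ne.symm hb),
        Equiv.swap_apply_right, Equiv.swap_apply_right,
        Equiv.swap_apply_of_ne_of_ne ha h]
    by_cases hx3 : x = u a
    · subst hx3
      rw [Equiv.swap_apply_left, huu b,
        Equiv.swap_apply_of_ne_of_ne (Ne.symm h) (Ne.symm hb),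
        Equiv.swap_apply_of_ne_of_ne ha h, huu a, Equiv.swap_apply_left]
    by_cases hx4 : x = u b
    · subst hx4
      rw [Equiv.swap_apply_right, huu a,
        Equiv.swap_apply_of_ne_of_ne (Ne.symm ha) (Ne.symm hba),
        Equiv.swap_apply_of_ne_of_ne hba hb, huu b, Equiv.swap_apply_right]
    · have h1 : u x ≠ u a := fun e => hx1 (hinj e)
      have h2 : u x ≠ u b := fun e => hx2 (hinj e)
      have h3 : u x ≠ a := fun e => hx3 (by rw [← e, huu])
      have h4 : u x ≠ b := fun e => hx4 (by rw [← e, huu])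
      rw [Equiv.swap_apply_of_ne_of_ne hx3 hx4,
        Equiv.swap_apply_of_ne_of_ne h1 h2,
        Equiv.swap_apply_of_ne_of_ne hx1 hx2,
        Equiv.swap_apply_of_ne_of_ne h3 h4]
  · rintro t' ⟨c, d, hcd, rfl⟩ hne heq
    have E : ∀ x, Equiv.swap c d (u (Equiv.swap c d x)) =
        Equiv.swap a b (u (Equiv.swap a b x)) := fun x => by
      have := DFunLike.congr_fun heq x
      simpa [Equiv.swap_inv, Equiv.Perm.mul_apply] using this
    have Ea : Equiv.swap c d (u (Equiv.swap c d a)) = u b := by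
      rw [E a, Equiv.swap_apply_left, Equiv.swap_apply_of_ne_of_ne hba hb]
    have Eb : Equiv.swap c d (u (Equiv.swap c d b)) = u a := by
      rw [E b, Equiv.swap_apply_right, Equiv.swap_apply_of_ne_of_ne ha h]
    have hac : a ≠ c := aux_ne u huu hfpf a b c d hab hne Ea
    have had : a ≠ d := aux_ne u huu hfpf a b d c hab (by rwa [Equiv.swap_comm])
      (by rwa [Equiv.swap_comm])
    have hbc : b ≠ c := aux_ne u huu hfpf b a c d hab.symm
      (fun hh => hne (by rw [hh, Equiv.swap_comm])) Eb
    have hbd : b ≠ d := aux_ne u huu hfpf b a d c hab.symm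
      (fun hh => hne (by rw [Equiv.swap_comm c d, hh, Equiv.swap_comm b a]))
      (by rwa [Equiv.swap_comm])
    rw [Equiv.swap_apply_of_ne_of_ne hac had] at Ea
    by_cases h1 : u a = c
    · rw [← h1, Equiv.swap_apply_left] at Ea
      rw [← h1, Ea]
    · by_cases h2 : u a = d
      · rw [← h2, Equiv.swap_apply_right] at Ea
        rw [← h2, Ea, Equiv.swap_comm]
      · rw [Equiv.swap_apply_of_ne_of_ne h1 h2] at Ea
        exact absurd Ea huab
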